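/- Let R be a commutative ring. For a polynomial P ∈ R[t] with coefficients m_i ∈ R, define χ_j(P) = Σ_i (-1)^{i-j} · C(i,j) · m_i ∈ R. Let P, Q ∈ R[t] and j ≥ 0. If χ_r(P) = 0 and χ_r(Q) = 0 for all 0 ≤ r < j, then χ_k(P·Q) = 0 for 0 ≤ k < 2j, χ_{2j}(P·Q) = χ_j(P)·χ_j(Q), and χ_{2j+1}(P·Q) = χ_j(P)·χ_{j+1}(Q) + χ_{j+1}(P)·χ_j(Q). -/

import Mathlib

open Polynomial Finset

/-- The `j`-th higher Euler characteristic of a polynomial `P = Σ mᵢ tⁱ` over a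
commutative ring `R`: `χⱼ(P) = Σᵢ (-1)^(i-j) · C(i,j) · mᵢ`. -/
def higherEulerChar (R : Type*) [CommRing R] (j : ℕ) (P : Polynomial R) : R :=
  ∑ i ∈ Finset.range (P.natDegree + 1), (-1 : R) ^ (i - j) * (i.choose j • P.coeff i)

lemma higherEulerChar_eq_coeff_comp (R : Type*) [CommRing R] (j : ℕ) (P : Polynomial R) :
    higherEulerChar R j P = (P.comp (X - 1)).coeff j := by
  have h : P.comp (X - 1) =
      ∑ i ∈ Finset.range (P.natDegree + 1), C (P.coeff i) * (X - 1) ^ i := by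
    rw [comp, eval₂_eq_sum_range]
  rw [h, finset_sum_coeff]
  refine Finset.sum_congr rfl fun i _ => ?_
  have : ((X - 1 : Polynomial R) ^ i).coeff j = (-1 : R) ^ (i - j) * (i.choose j : R) := by
    have : (X - 1 : Polynomial R) = X + C (-1) := by simp [sub_eq_add_neg]
    rw [this, coeff_X_add_C_pow]
  rw [coeff_C_mul, this, nsmul_eq_mul]
  ring

/-- Over any commutative ring `R` (e.g. the Grothendieck ring `K₀(𝒫)`), if
`χᵣ(P) = 0` and `χᵣ(Q) = 0` for all `0 ≤ r < j`, then `χₖ(P·Q) = 0` for `0 ≤ k < 2j`,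
`χ_{2j}(P·Q) = χⱼ(P)·χⱼ(Q)`, and `χ_{2j+1}(P·Q) = χⱼ(P)·χ_{j+1}(Q) + χ_{j+1}(P)·χⱼ(Q)`. -/
theorem higherEulerChar_mul (R : Type*) [CommRing R] (P Q : Polynomial R) (j : ℕ)
    (hP : ∀ r < j, higherEulerChar R r P = 0) (hQ : ∀ r < j, higherEulerChar R r Q = 0) :
    (∀ k < 2 * j, higherEulerChar R k (P * Q) = 0) ∧
      higherEulerChar R (2 * j) (P * Q) = higherEulerChar R j P * higherEulerChar R j Q ∧
        higherEulerChar R (2 * j + 1) (P * Q) =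
          higherEulerChar R j P * higherEulerChar R (j + 1) Q +
            higherEulerChar R (j + 1) P * higherEulerChar R j Q := by
  set A := P.comp (X - 1) with hA
  set B := Q.comp (X - 1) with hB
  have hPA : ∀ k, higherEulerChar R k P = A.coeff k := fun k =>
    higherEulerChar_eq_coeff_comp R k P
  have hQB : ∀ k, higherEulerChar R k Q = B.coeff k := fun k =>
    higherEulerChar_eq_coeff_comp R k Q
  have hPQ : ∀ k, higherEulerChar R k (P * Q) = (A * B).coeff k := by
    intro k
    rw [higherEulerChar_eq_coeff_comp, mul_comp]
  have hA0 : ∀ r < j, A.coeff r = 0 := fun r hr => (hPA r).symm.trans (hP r hr)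
  have hB0 : ∀ r < j, B.coeff r = 0 := fun r hr => (hQB r).symm.trans (hQ r hr)
  have key : ∀ k, (A * B).coeff k =
      ∑ x ∈ Finset.HasAntidiagonal.antidiagonal k, A.coeff x.1 * B.coeff x.2 := fun k => coeff_mul A B k
  refine ⟨?_, ?_, ?_⟩
  · intro k hk
    rw [hPQ, key]
    refine Finset.sum_eq_zero fun x hx => ?_
    rw [Finset.HasAntidiagonal.mem_antidiagonal] at hx
    rcases lt_or_ge x.1 j with h | h
    · rw [hA0 _ h, zero_mul]
    · have : x.2 < j := by omega
      rw [hB0 _ this, mul_zero]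
  · rw [hPQ, key, hPA, hQB]
    rw [Finset.sum_eq_single (j, j)]
    · intro x hx hne
      rw [Finset.HasAntidiagonal.mem_antidiagonal] at hx
      rcases lt_or_ge x.1 j with h | h
      · rw [hA0 _ h, zero_mul]
      · have : x.2 < j ∨ x = (j, j) := by
          rcases eq_or_lt_of_le h with h' | h'
          · right; ext <;> omega
          · left; omega
        rcases this with h' | h'
        · rw [hB0 _ h', mul_zero]
        · exact absurd h' hne
    · intro h
      exact absurd (Finset.HasAntidiagonal.mem_antidiagonal.2 (by omega)) h
  · rw [hPQ, key, hPA, hPA, hQB, hQB]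
    have hsub : Finset.HasAntidiagonal.antidiagonal (2 * j + 1) =
        insert (j, j + 1) (insert (j + 1, j)
          ((Finset.HasAntidiagonal.antidiagonal (2 * j + 1)).filter fun x => x.1 ≠ j ∧ x.1 ≠ j + 1)) := by
      ext x
      simp only [Finset.mem_insert, Finset.mem_filter, Finset.HasAntidiagonal.mem_antidiagonal]
      constructor
      · intro hx
        rcases eq_or_ne x.1 j with h | h
        · left; ext <;> omega
        rcases eq_or_ne x.1 (j + 1) with h' | h'
        · right; left; ext <;> omega
        · right; right; exact ⟨hx, h, h'⟩
      · rintro (rfl | rfl | ⟨hx, _⟩)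
        · omega
        · omega
        · exact hx
    rw [hsub, Finset.sum_insert, Finset.sum_insert]
    · have : ∑ x ∈ (Finset.HasAntidiagonal.antidiagonal (2 * j + 1)).filter
          (fun x => x.1 ≠ j ∧ x.1 ≠ j + 1), A.coeff x.1 * B.coeff x.2 = 0 := by
        refine Finset.sum_eq_zero fun x hx => ?_
        rw [Finset.mem_filter, Finset.HasAntidiagonal.mem_antidiagonal] at hx
        obtain ⟨hsum, h1, h2⟩ := hx
        rcases lt_or_ge x.1 j with h | h
        · rw [hA0 _ h, zero_mul]
        · have : x.2 < j := by omega
          rw [hB0 _ this, mul_zero]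
      rw [this, add_zero]
    · simp
    · simp only [Finset.mem_insert, Finset.mem_filter, Finset.HasAntidiagonal.mem_antidiagonal]
      push_neg
      refine ⟨by simp, fun _ _ => ?_⟩
      omega
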